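/- Let n ≥ 2. Then M is positive semidefinite with a one-dimensional kernel (0 is a simple eigenvalue of M and all other eigenvalues are positive), and N is positive definite (all eigenvalues of N are positive). -/

import Mathlib

/-- The tridiagonal matrix `M` (of size `(n+1) × (n+1)`). -/
noncomputable def Mmat (n : ℕ) : Matrix (Fin (n+1)) (Fin (n+1)) ℝ :=
  Matrix.of fun i j =>
    if i = j then (if i.val = 0 ∨ i.val = n then 1/5 else 2/7)
    else if i.val + 1 = j.val ∨ j.val + 1 = i.val then
      (if min i.val j.val = 0 ∨ max i.val j.val = n then -(1/Real.sqrt 35) else -(1/7))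
    else 0

/-- The tridiagonal matrix `N` (of size `(n+1) × (n+1)`). -/
noncomputable def Nmat (n : ℕ) : Matrix (Fin (n+1)) (Fin (n+1)) ℝ :=
  Matrix.of fun i j =>
    if i = j then (if i.val = 0 ∨ i.val = n then 3/5 else 4/7)
    else if i.val + 1 = j.val ∨ j.val + 1 = i.val then
      (if min i.val j.val = 0 ∨ max i.val j.val = n then -(1/Real.sqrt 35) else -(1/7))
    else 0


open Matrix Finset

noncomputable def wv (n : ℕ) (i : Fin (n+1)) : ℝ :=
  if i.val = 0 ∨ i.val = n then (Real.sqrt 5)⁻¹ else (Real.sqrt 7)⁻¹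

lemma wv_pos (n : ℕ) (i : Fin (n+1)) : 0 < wv n i := by
  unfold wv; split_ifs <;> positivity

def bfun (m k : ℕ) : ℝ := (if k = m then 1 else 0) - (if k + 1 = m then 1 else 0)

noncomputable def Amat (n : ℕ) : Matrix (Fin n) (Fin (n+1)) ℝ :=
  fun k i => bfun i.val k.val * wv n i

lemma fin_sum_single {m : ℕ} (a : ℕ) (ha : a < m) (f : Fin m → ℝ) :
    ∑ k : Fin m, (if (k : ℕ) = a then f k else 0) = f ⟨a, ha⟩ := by
  rw [Finset.sum_eq_single (⟨a, ha⟩ : Fin m)]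
  · simp
  · intro k _ hk
    rw [if_neg]; intro h; exact hk (Fin.ext h)
  · simp

lemma bfun_mul (a b k : ℕ) :
    bfun a k * bfun b k =
      if a = b then (if k = a then 1 else 0) + (if k + 1 = a then 1 else 0)
      else if b = a + 1 then -(if k = a then 1 else 0)
      else if a = b + 1 then -(if k = b then 1 else 0)
      else 0 := by
  unfold bfun
  split_ifs <;> first | (exfalso; omega) | norm_num

lemma Ssum (n : ℕ) (i j : Fin (n+1)) :
    ∑ k : Fin n, bfun i.val k.val * bfun j.val k.val =
      if i.val = j.val then
        ((if i.val = n then 0 else 1) + (if i.val = 0 then 0 else 1))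
      else if i.val + 1 = j.val ∨ j.val + 1 = i.val then -1
      else 0 := by
  simp only [bfun_mul]
  by_cases h1 : i.val = j.val
  · simp only [if_pos h1, Finset.sum_add_distrib]
    congr 1
    · by_cases hn : i.val = n
      · rw [if_pos hn]
        apply Finset.sum_eq_zero
        intro k _
        exact if_neg (by have := k.isLt; omega)
      · rw [if_neg hn]
        have hlt : i.val < n := lt_of_le_of_ne (by have := i.isLt; omega) hn
        exact fin_sum_single i.val hlt (fun _ => 1)
    · by_cases h0 : i.val = 0
      · rw [if_pos h0]
        apply Finset.sum_eq_zero
        intro k _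
        exact if_neg (by omega)
      · rw [if_neg h0]
        have hlt : i.val - 1 < n := by have := i.isLt; omega
        have hc : ∀ k : Fin n, (if (k : ℕ) + 1 = i.val then (1:ℝ) else 0)
            = if (k : ℕ) = i.val - 1 then 1 else 0 := fun k => if_congr (by omega) rfl rfl
        simp only [hc]
        exact fin_sum_single (i.val - 1) hlt (fun _ => 1)
  · simp only [if_neg h1]
    by_cases h2 : j.val = i.val + 1
    · simp only [if_pos h2]
      have hor : i.val + 1 = j.val ∨ j.val + 1 = i.val := Or.inl h2.symm
      rw [if_pos hor]
      have hlt : i.val < n := by have := j.isLt; omega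
      calc ∑ k : Fin n, -(if (k:ℕ) = i.val then (1:ℝ) else 0)
          = ∑ k : Fin n, (if (k:ℕ) = i.val then (-1:ℝ) else 0) := by
            apply Finset.sum_congr rfl; intro k _; split_ifs <;> norm_num
        _ = -1 := fin_sum_single i.val hlt (fun _ => (-1:ℝ))
    · by_cases h3 : i.val = j.val + 1
      · simp only [if_neg h2, if_pos h3]
        have hor : i.val + 1 = j.val ∨ j.val + 1 = i.val := Or.inr h3.symm
        rw [if_pos hor]
        have hlt : j.val < n := by have := i.isLt; omega
        calc ∑ k : Fin n, -(if (k:ℕ) = j.val then (1:ℝ) else 0)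
            = ∑ k : Fin n, (if (k:ℕ) = j.val then (-1:ℝ) else 0) := by
              apply Finset.sum_congr rfl; intro k _; split_ifs <;> norm_num
          _ = -1 := fin_sum_single j.val hlt (fun _ => (-1:ℝ))
      · simp only [if_neg h2, if_neg h3]
        rw [if_neg (by omega), Finset.sum_const, smul_zero]

lemma Mmat_eq_fact (n : ℕ) (hn : 2 ≤ n) : Mmat n = (Amat n)ᴴ * Amat n := by
  have h5 : Real.sqrt 5 * Real.sqrt 5 = 5 := Real.mul_self_sqrt (by norm_num)
  have h7 : Real.sqrt 7 * Real.sqrt 7 = 7 := Real.mul_self_sqrt (by norm_num)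
  have h35 : Real.sqrt 35 = Real.sqrt 5 * Real.sqrt 7 := by
    rw [show (35:ℝ) = 5 * 7 by norm_num, Real.sqrt_mul (by norm_num)]
  have h5p : (0:ℝ) < Real.sqrt 5 := Real.sqrt_pos.mpr (by norm_num)
  have h7p : (0:ℝ) < Real.sqrt 7 := Real.sqrt_pos.mpr (by norm_num)
  ext i j
  rw [Matrix.mul_apply]
  simp only [conjTranspose_apply, Amat, star_trivial]
  have hc : ∀ k : Fin n, (bfun i.val k.val * wv n i) * (bfun j.val k.val * wv n j)
      = (wv n i * wv n j) * (bfun i.val k.val * bfun j.val k.val) := fun k => by ring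
  simp only [hc]
  rw [← Finset.mul_sum, Ssum]
  unfold Mmat wv
  simp only [Matrix.of_apply]
  rw [h35]
  by_cases hij : i.val = j.val
  · have hij' : i = j := Fin.ext hij
    rw [if_pos hij', if_pos hij]
    simp only [← hij]
    split_ifs <;> first | (exfalso; omega) | (field_simp; try ring; try linarith)
  · have hij' : ¬ i = j := fun h => hij (by rw [h])
    rw [if_neg hij', if_neg hij]
    split_ifs <;> first | (exfalso; omega) | (field_simp; try ring; try linarith)

noncomputable def vvec (n : ℕ) : Fin (n+1) → ℝ := fun i => (wv n i)⁻¹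

lemma Amat_mulVec (n : ℕ) (x : Fin (n+1) → ℝ) (k : Fin n) :
    (Amat n *ᵥ x) k =
      wv n ⟨k.val, by omega⟩ * x ⟨k.val, by omega⟩
        - wv n ⟨k.val + 1, by omega⟩ * x ⟨k.val + 1, by omega⟩ := by
  rw [mulVec, dotProduct]
  have hc : ∀ i : Fin (n+1), Amat n k i * x i =
      (if (i : ℕ) = k.val then wv n i * x i else 0)
        - (if (i : ℕ) = k.val + 1 then wv n i * x i else 0) := by
    intro i
    unfold Amat bfun
    split_ifs <;> first | (exfalso; omega) | ring
  simp only [hc]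
  rw [Finset.sum_sub_distrib,
    fin_sum_single k.val (by omega) (fun i => wv n i * x i),
    fin_sum_single (k.val + 1) (by omega) (fun i => wv n i * x i)]

lemma Amat_mulVec_eq_zero_iff (n : ℕ) (x : Fin (n+1) → ℝ) :
    Amat n *ᵥ x = 0 ↔ ∃ c : ℝ, x = c • vvec n := by
  constructor
  · intro h
    refine ⟨wv n 0 * x 0, ?_⟩
    have key : ∀ m : ℕ, ∀ hm : m < n + 1,
        wv n ⟨m, hm⟩ * x ⟨m, hm⟩ = wv n 0 * x 0 := by
      intro m
      induction m with
      | zero => intro hm; rfl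
      | succ p ih =>
        intro hm
        have hp : p < n := by omega
        have h0 := congrFun h ⟨p, hp⟩
        rw [Amat_mulVec] at h0
        have := ih (by omega)
        simp only [Pi.zero_apply, sub_eq_zero] at h0
        rw [← h0]
        exact this
    funext i
    have hw := (wv_pos n i).ne'
    have := key i.val i.isLt
    simp only [Pi.smul_apply, vvec, smul_eq_mul]
    rw [← this]
    field_simp
  · rintro ⟨c, rfl⟩
    funext k
    rw [Amat_mulVec]
    simp only [Pi.smul_apply, vvec, smul_eq_mul, Pi.zero_apply]
    have h1 := (wv_pos n ⟨k.val, by omega⟩).ne'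
    have h2 := (wv_pos n ⟨k.val + 1, by omega⟩).ne'
    field_simp
    ring

lemma ker_Mmat (n : ℕ) (hn : 2 ≤ n) :
    LinearMap.ker (Mmat n).mulVecLin = Submodule.span ℝ {vvec n} := by
  ext x
  rw [LinearMap.mem_ker, Matrix.mulVecLin_apply, Submodule.mem_span_singleton,
    Mmat_eq_fact n hn, Matrix.conjTranspose_mul_self_mulVec_eq_zero,
    Amat_mulVec_eq_zero_iff]
  constructor
  · rintro ⟨c, rfl⟩; exact ⟨c, rfl⟩
  · rintro ⟨c, rfl⟩; exact ⟨c, rfl⟩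

lemma finrank_ker (n : ℕ) (hn : 2 ≤ n) :
    Module.finrank ℝ (LinearMap.ker (Mmat n).mulVecLin) = 1 := by
  rw [ker_Mmat n hn]
  apply finrank_span_singleton
  intro h
  have := congrFun h 0
  simp only [vvec, Pi.zero_apply] at this
  exact (inv_pos.mpr (wv_pos n 0)).ne' this

noncomputable def dvec (n : ℕ) (i : Fin (n+1)) : ℝ :=
  if i.val = 0 ∨ i.val = n then 2/5 else 2/7

lemma dvec_pos (n : ℕ) (i : Fin (n+1)) : 0 < dvec n i := by
  unfold dvec; split_ifs <;> norm_num

lemma Nmat_eq (n : ℕ) : Nmat n = Mmat n + Matrix.diagonal (dvec n) := by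
  ext i j
  by_cases hij : i = j
  · subst hij
    simp only [Nmat, Mmat, Matrix.of_apply, if_pos rfl, Matrix.add_apply,
      Matrix.diagonal_apply_eq, dvec]
    split_ifs <;> norm_num
  · simp only [Nmat, Mmat, Matrix.of_apply, if_neg hij, Matrix.add_apply,
      Matrix.diagonal_apply_ne _ hij, add_zero]

/-- For `n ≥ 2`, `M` is positive semidefinite with a one-dimensional kernel
(so `0` is a simple eigenvalue of `M` and all of its other eigenvalues are
positive), and `N` is positive definite. -/
theorem Mmat_posSemidef_and_Nmat_posDef (n : ℕ) (hn : 2 ≤ n) :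
    (Mmat n).PosSemidef
      ∧ Module.finrank ℝ (LinearMap.ker (Mmat n).mulVecLin) = 1
      ∧ (Nmat n).PosDef := by
  have hM : (Mmat n).PosSemidef := by
    rw [Mmat_eq_fact n hn]
    exact Matrix.posSemidef_conjTranspose_mul_self (Amat n)
  refine ⟨hM, finrank_ker n hn, ?_⟩
  have hD : (Matrix.diagonal (dvec n)).PosDef := Matrix.PosDef.diagonal (dvec_pos n)
  rw [Nmat_eq n]
  constructor
  · exact hM.1.add hD.1
  · intro x hx
    rw [add_comm (Mmat n)]
    exact (hD.add_posSemidef hM).2 hx
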